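/- Let x, y be rational numbers and n, d positive integers such that: (i) y = -((d/n + n/2)x + d^2/(2n^2) + d/2); (ii) x^2 - 2y ≥ 0; (iii) (n-x)^2 - 2(d + n^2/2 + y) ≥ 0; (iv) 0 < x + d/n + n/2 < n. Then x = -d/n and y = d^2/(2n^2). -/
import Mathlib


theorem wall_numerics (n d : ℕ) (hn : 0 < n) (hd : 0 < d) (x y : ℚ)
    (h1 : y = -(((d:ℚ)/n + (n:ℚ)/2)*x + (d:ℚ)^2/(2*(n:ℚ)^2) + (d:ℚ)/2))
    (h2 : x^2 - 2*y ≥ 0)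
    (h3 : ((n:ℚ) - x)^2 - 2*((d:ℚ) + (n:ℚ)^2/2 + y) ≥ 0)
    (h4l : 0 < x + (d:ℚ)/n + (n:ℚ)/2) (h4r : x + (d:ℚ)/n + (n:ℚ)/2 < (n:ℚ)) :
    x = -(d:ℚ)/n ∧ y = (d:ℚ)^2/(2*(n:ℚ)^2) := by
  have hN : (0:ℚ) < (n:ℚ) := by exact_mod_cast hn
  have hN0 : (n:ℚ) ≠ 0 := ne_of_gt hN
  set t : ℚ := x + (d:ℚ)/n with ht
  clear_value t
  have e2 : t*(t+(n:ℚ)) = x^2 - 2*y := by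
    rw [h1, ht]; field_simp; ring
  have e3 : t*(t-(n:ℚ)) = ((n:ℚ) - x)^2 - 2*((d:ℚ) + (n:ℚ)^2/2 + y) := by
    rw [h1, ht]; field_simp; ring
  have ht1 : t ≤ 0 := by
    by_contra h; push_neg at h
    nlinarith [mul_pos h (show (0:ℚ) < (n:ℚ) - t by linarith)]
  have ht2 : 0 ≤ t := by
    by_contra h; push_neg at h
    nlinarith [mul_pos (show (0:ℚ) < -t by linarith) (show (0:ℚ) < t + (n:ℚ) by linarith)]
  have ht0 : t = 0 := le_antisymm ht1 ht2
  have hx : x = -(d:ℚ)/n := by rw [ht] at ht0; rw [neg_div]; linarith [ht0]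
  refine ⟨hx, ?_⟩
  rw [h1, hx]; field_simp; ring
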